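/- Consider the single-stage Bellman value J_1(X) = -λX + max_{0 ≤ x ≤ X, m ≥ 0} { -dm + x·P_{m,x}(μ)·(1+λ) } with d > 0, λ ≥ 0, X a nonnegative integer, and P_{m,x}(μ) = P(Binomial(m,μ) ≥ x) with P_{m,0}(μ)=1 and P_{0,x}(μ)=0 for x>0. If μ < d/(1+λ), then the maximum is attained only at m = 0 (equivalently, -dm + x·P_{m,x}(μ)(1+λ) < 0 for all m ≥ 1 and 1 ≤ x ≤ X), so J_1(X) = -λX. -/

import Mathlib

/-- Tail probability `P(S ≥ x)` for a Binomial(m, μ) random variable `S`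
(with the conventions `P_{m,0}(μ) = 1` and `P_{0,x}(μ) = 0` for `x > 0`). -/
noncomputable def binomTail (m x : ℕ) (μ : ℝ) : ℝ :=
  ∑ k ∈ Finset.Icc x m, (m.choose k : ℝ) * μ ^ k * (1 - μ) ^ (m - k)

lemma binom_term_nonneg (m k : ℕ) {μ : ℝ} (hμ0 : 0 ≤ μ) (hμ1 : μ ≤ 1) :
    0 ≤ (m.choose k : ℝ) * μ ^ k * (1 - μ) ^ (m - k) := by
  have : (0:ℝ) ≤ 1 - μ := by linarith
  positivity

lemma binom_mean (m : ℕ) (μ : ℝ) :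
    ∑ k ∈ Finset.range (m+1), (k : ℝ) * ((m.choose k : ℝ) * μ ^ k * (1 - μ) ^ (m - k))
      = (m : ℝ) * μ := by
  induction m with
  | zero => simp
  | succ n ih =>
    have hid : ∀ k, ((k+1 : ℕ) : ℝ) * ((n+1).choose (k+1) : ℝ)
        = ((n+1 : ℕ) : ℝ) * (n.choose k : ℝ) := by
      intro k
      have := Nat.add_one_mul_choose_eq n k
      have h2 : ((n+1) * n.choose k : ℕ) = ((n+1).choose (k+1) * (k+1) : ℕ) := this
      have h3 : (((n+1) * n.choose k : ℕ) : ℝ) = (((n+1).choose (k+1) * (k+1) : ℕ) : ℝ) := by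
        exact_mod_cast congrArg (Nat.cast (R := ℝ)) h2
      push_cast at h3
      push_cast
      linarith
    calc ∑ k ∈ Finset.range (n+2), (k : ℝ) * (((n+1).choose k : ℝ) * μ ^ k * (1 - μ) ^ (n+1 - k))
        = ∑ k ∈ Finset.range (n+1), ((k+1 : ℕ) : ℝ) * (((n+1).choose (k+1) : ℝ) * μ ^ (k+1) * (1 - μ) ^ (n+1 - (k+1))) := by
          rw [Finset.sum_range_succ']
          simp
      _ = ((n+1 : ℕ) : ℝ) * μ * ∑ k ∈ Finset.range (n+1), ((n.choose k : ℝ) * μ ^ k * (1 - μ) ^ (n - k)) := by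
          rw [Finset.mul_sum]
          refine Finset.sum_congr rfl fun k _ => ?_
          have h := hid k
          have hsub : n + 1 - (k+1) = n - k := by omega
          rw [hsub]
          calc ((k+1 : ℕ) : ℝ) * (((n+1).choose (k+1) : ℝ) * μ ^ (k+1) * (1 - μ) ^ (n - k))
              = (((k+1 : ℕ) : ℝ) * ((n+1).choose (k+1) : ℝ)) * μ ^ (k+1) * (1 - μ) ^ (n - k) := by ring
            _ = (((n+1 : ℕ) : ℝ) * (n.choose k : ℝ)) * μ ^ (k+1) * (1 - μ) ^ (n - k) := by rw [h]
            _ = ((n+1 : ℕ) : ℝ) * μ * ((n.choose k : ℝ) * μ ^ k * (1 - μ) ^ (n - k)) := by ring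
      _ = ((n+1 : ℕ) : ℝ) * μ := by
          have hsum : ∑ k ∈ Finset.range (n+1), ((n.choose k : ℝ) * μ ^ k * (1 - μ) ^ (n - k)) = 1 := by
            have := add_pow μ (1 - μ) n
            simp only [add_sub_cancel, one_pow] at this
            calc ∑ k ∈ Finset.range (n+1), ((n.choose k : ℝ) * μ ^ k * (1 - μ) ^ (n - k))
                = ∑ k ∈ Finset.range (n+1), μ ^ k * (1 - μ) ^ (n - k) * (n.choose k : ℝ) := by
                  refine Finset.sum_congr rfl fun k _ => by ring
              _ = 1 := this.symm
          rw [hsum, mul_one]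

lemma binomTail_markov (m x : ℕ) {μ : ℝ} (hμ0 : 0 ≤ μ) (hμ1 : μ ≤ 1) :
    (x : ℝ) * binomTail m x μ ≤ (m : ℝ) * μ := by
  have h1 : (x : ℝ) * binomTail m x μ
      ≤ ∑ k ∈ Finset.Icc x m, (k : ℝ) * ((m.choose k : ℝ) * μ ^ k * (1 - μ) ^ (m - k)) := by
    rw [binomTail, Finset.mul_sum]
    refine Finset.sum_le_sum fun k hk => ?_
    have hxk : (x : ℝ) ≤ k := by exact_mod_cast (Finset.mem_Icc.mp hk).1
    exact mul_le_mul_of_nonneg_right hxk (binom_term_nonneg m k hμ0 hμ1)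
  have h2 : ∑ k ∈ Finset.Icc x m, (k : ℝ) * ((m.choose k : ℝ) * μ ^ k * (1 - μ) ^ (m - k))
      ≤ ∑ k ∈ Finset.range (m+1), (k : ℝ) * ((m.choose k : ℝ) * μ ^ k * (1 - μ) ^ (m - k)) := by
    refine Finset.sum_le_sum_of_subset_of_nonneg ?_ fun k _ _ => ?_
    · intro k hk
      simp only [Finset.mem_Icc] at hk
      simp only [Finset.mem_range]; omega
    · exact mul_nonneg (Nat.cast_nonneg k) (binom_term_nonneg m k hμ0 hμ1)
  calc (x : ℝ) * binomTail m x μ ≤ _ := h1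
    _ ≤ _ := h2
    _ = (m : ℝ) * μ := binom_mean m μ

/-- Idle region (Lemma 2): if `μ < d/(1+λ)` then every decision `(m, x)` with
`m ≥ 1`, `1 ≤ x ≤ X` has strictly negative expected one-slot revenue
`-dm + x·P_{m,x}(μ)·(1+λ)`, and every decision `(m, x)` with `x ≤ X` has
nonpositive revenue; so the maximum is attained only at `m = 0` and
`J_1(X) = -λX`. -/
theorem idle_region (d lam μ : ℝ) (X : ℕ) (hd : 0 < d) (hlam : 0 ≤ lam)
    (hμ0 : 0 ≤ μ) (hμ1 : μ ≤ 1) (hμ : μ < d / (1 + lam)) :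
    (∀ m x : ℕ, 1 ≤ m → 1 ≤ x → x ≤ X →
      -d * (m : ℝ) + (x : ℝ) * binomTail m x μ * (1 + lam) < 0) ∧
    (∀ m x : ℕ, x ≤ X →
      -d * (m : ℝ) + (x : ℝ) * binomTail m x μ * (1 + lam) ≤ 0) := by
  have hl1 : (0:ℝ) < 1 + lam := by linarith
  have hμd : μ * (1 + lam) < d := (lt_div_iff₀ hl1).mp hμ
  have key : ∀ m x : ℕ, 1 ≤ m → 1 ≤ x →
      -d * (m : ℝ) + (x : ℝ) * binomTail m x μ * (1 + lam) < 0 := by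
    intro m x hm hx
    have hmark := binomTail_markov m x hμ0 hμ1
    have hm0 : (0:ℝ) < m := by exact_mod_cast hm
    have : (x : ℝ) * binomTail m x μ * (1 + lam) ≤ (m : ℝ) * μ * (1 + lam) :=
      mul_le_mul_of_nonneg_right hmark hl1.le
    have h2 : (m : ℝ) * μ * (1 + lam) < (m : ℝ) * d := by
      have : (m : ℝ) * (μ * (1 + lam)) < (m : ℝ) * d :=
        mul_lt_mul_of_pos_left hμd hm0
      linarith [this]
    nlinarith
  refine ⟨fun m x hm hx _ => key m x hm hx, fun m x _ => ?_⟩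
  rcases Nat.eq_zero_or_pos x with hx0 | hx
  · subst hx0
    simp only [Nat.cast_zero, zero_mul, add_zero]
    nlinarith [Nat.cast_nonneg (α := ℝ) m]
  rcases Nat.eq_zero_or_pos m with hm0 | hm
  · subst hm0
    have : binomTail 0 x μ = 0 := by
      rw [binomTail]
      rw [Finset.Icc_eq_empty (a := x) (b := 0) (by omega)]
      simp
    rw [this]
    simp
  exact (key m x hm hx).le
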